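/- Lemma 2 (positive definiteness of the central inertia tensor): Let C ⊆ ℝ³ be a bounded measurable set and ρ : ℝ³ → ℝ integrable on C with ρ ≥ 0 and m_F := ∫_C ρ > 0. Let I_C be a symmetric positive definite real 3×3 matrix, let m_B > 0 and set m_S := m_B + m_F. Then the matrix I(ρ) := I_C + Ī(ρ) − I_g(ρ) is symmetric and positive definite. -/

import Mathlib

open MeasureTheory Matrix

noncomputable section

/-- `Ī(ρ) := ∫_C ρ(x)(‖x‖²·𝟙 − x ⊗ x) dx`, the inertia tensor of the fluid about the origin
(entrywise integral). -/
def Ibar (C : Set (EuclideanSpace ℝ (Fin 3))) (ρ : EuclideanSpace ℝ (Fin 3) → ℝ) :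
    Matrix (Fin 3) (Fin 3) ℝ :=
  Matrix.of fun i j =>
    ∫ x in C, ρ x * (‖x‖ ^ 2 * (if i = j then (1 : ℝ) else 0) - x i * x j)

/-- `g(ρ) := ∫_C ρ(x)·x dx`. -/
def gvec (C : Set (EuclideanSpace ℝ (Fin 3))) (ρ : EuclideanSpace ℝ (Fin 3) → ℝ) :
    EuclideanSpace ℝ (Fin 3) :=
  ∫ x in C, ρ x • x

/-- `I_g(ρ) := (1/m_S)·(‖g(ρ)‖²·𝟙 − g(ρ) ⊗ g(ρ))`. -/
def Ig (C : Set (EuclideanSpace ℝ (Fin 3))) (ρ : EuclideanSpace ℝ (Fin 3) → ℝ) (mS : ℝ) :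
    Matrix (Fin 3) (Fin 3) ℝ :=
  (1 / mS) • Matrix.of fun i j =>
    ‖gvec C ρ‖ ^ 2 * (if i = j then (1 : ℝ) else 0) - gvec C ρ i * gvec C ρ j

/- ### Auxiliary lemmas -/

lemma aux_norm_sq_eq (x : EuclideanSpace ℝ (Fin 3)) : ‖x‖ ^ 2 = ∑ i, x i ^ 2 := by
  rw [EuclideanSpace.norm_eq, Real.sq_sqrt (by positivity)]
  simp

lemma aux_cont_coord (i : Fin 3) : Continuous fun x : EuclideanSpace ℝ (Fin 3) => x i :=
  (EuclideanSpace.proj (𝕜 := ℝ) i).continuous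

lemma aux_int_mul {C : Set (EuclideanSpace ℝ (Fin 3))} (hC_meas : MeasurableSet C)
    (hC_bdd : Bornology.IsBounded C) {ρ : EuclideanSpace ℝ (Fin 3) → ℝ}
    (hρ_int : IntegrableOn ρ C) {φ : EuclideanSpace ℝ (Fin 3) → ℝ} (hφ : Continuous φ) :
    Integrable (fun x => ρ x * φ x) (volume.restrict C) := by
  obtain ⟨r, hr⟩ := hC_bdd.subset_closedBall 0
  obtain ⟨M, hM⟩ := (isCompact_closedBall (0 : EuclideanSpace ℝ (Fin 3)) r).exists_bound_of_continuousOn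
    hφ.continuousOn
  refine Integrable.mono' (hρ_int.abs.mul_const M)
    (hρ_int.aestronglyMeasurable.mul hφ.aestronglyMeasurable) ?_
  filter_upwards [self_mem_ae_restrict hC_meas] with x hx
  rw [Real.norm_eq_abs, abs_mul]
  exact mul_le_mul_of_nonneg_left (by simpa using hM x (hr hx)) (abs_nonneg _)

lemma aux_int_smul {C : Set (EuclideanSpace ℝ (Fin 3))} (hC_meas : MeasurableSet C)
    (hC_bdd : Bornology.IsBounded C) {ρ : EuclideanSpace ℝ (Fin 3) → ℝ}
    (hρ_int : IntegrableOn ρ C) :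
    Integrable (fun x => ρ x • x) (volume.restrict C) := by
  obtain ⟨r, hr⟩ := hC_bdd.subset_closedBall 0
  refine Integrable.mono' (hρ_int.abs.mul_const (max r 0))
    (hρ_int.aestronglyMeasurable.smul continuous_id.aestronglyMeasurable) ?_
  filter_upwards [self_mem_ae_restrict hC_meas] with x hx
  rw [norm_smul, Real.norm_eq_abs]
  refine mul_le_mul_of_nonneg_left ?_ (abs_nonneg _)
  have : ‖x‖ ≤ r := by simpa using Metric.mem_closedBall.mp (hr hx)
  exact le_trans this (le_max_left _ _)

lemma aux_gvec_coord {C : Set (EuclideanSpace ℝ (Fin 3))} (hC_meas : MeasurableSet C)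
    (hC_bdd : Bornology.IsBounded C) {ρ : EuclideanSpace ℝ (Fin 3) → ℝ}
    (hρ_int : IntegrableOn ρ C) (i : Fin 3) :
    gvec C ρ i = ∫ x in C, ρ x * x i := by
  have h := (EuclideanSpace.proj (𝕜 := ℝ) i).integral_comp_comm
    (aux_int_smul hC_meas hC_bdd hρ_int)
  calc gvec C ρ i = EuclideanSpace.proj (𝕜 := ℝ) i (∫ x in C, ρ x • x) := rfl
    _ = ∫ x in C, EuclideanSpace.proj (𝕜 := ℝ) i (ρ x • x) := h.symm
    _ = ∫ x in C, ρ x * x i := rfl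

lemma aux_Ibar_symm (C : Set (EuclideanSpace ℝ (Fin 3))) (ρ : EuclideanSpace ℝ (Fin 3) → ℝ) :
    (Ibar C ρ).IsSymm := by
  refine Matrix.IsSymm.ext fun i j => ?_
  unfold Ibar
  simp only [Matrix.of_apply]
  congr 1
  funext x
  have h1 : (if j = i then (1 : ℝ) else 0) = (if i = j then 1 else 0) := by
    by_cases h : i = j
    · simp [h]
    · simp [h, Ne.symm h]
  rw [h1, mul_comm (x j) (x i)]

lemma aux_Ig_symm (C : Set (EuclideanSpace ℝ (Fin 3))) (ρ : EuclideanSpace ℝ (Fin 3) → ℝ)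
    (mS : ℝ) : (Ig C ρ mS).IsSymm := by
  refine Matrix.IsSymm.ext fun i j => ?_
  unfold Ig
  simp only [Matrix.smul_apply, Matrix.of_apply, smul_eq_mul]
  have h1 : (if j = i then (1 : ℝ) else 0) = (if i = j then 1 else 0) := by
    by_cases h : i = j
    · simp [h]
    · simp [h, Ne.symm h]
  rw [h1, mul_comm (gvec C ρ j) (gvec C ρ i)]

lemma aux_quad_Ibar {C : Set (EuclideanSpace ℝ (Fin 3))} (hC_meas : MeasurableSet C)
    (hC_bdd : Bornology.IsBounded C) {ρ : EuclideanSpace ℝ (Fin 3) → ℝ}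
    (hρ_int : IntegrableOn ρ C) (v : Fin 3 → ℝ) :
    v ⬝ᵥ (Ibar C ρ) *ᵥ v =
      ∫ x in C, ρ x * ((∑ i, v i ^ 2) * (∑ i, x i ^ 2) - (∑ i, v i * x i) ^ 2) := by
  have hφ : ∀ i j : Fin 3, Continuous fun x : EuclideanSpace ℝ (Fin 3) =>
      (‖x‖ ^ 2 * (if i = j then (1 : ℝ) else 0) - x i * x j) * (v i * v j) := by
    intro i j
    exact (((continuous_norm.pow 2).mul continuous_const).sub
      ((aux_cont_coord i).mul (aux_cont_coord j))).mul continuous_const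
  have hint : ∀ i j : Fin 3, Integrable (fun x : EuclideanSpace ℝ (Fin 3) =>
      v i * (ρ x * (‖x‖ ^ 2 * (if i = j then (1 : ℝ) else 0) - x i * x j) * v j))
      (volume.restrict C) := by
    intro i j
    have h := aux_int_mul hC_meas hC_bdd hρ_int (hφ i j)
    have heq : (fun x : EuclideanSpace ℝ (Fin 3) =>
        v i * (ρ x * (‖x‖ ^ 2 * (if i = j then (1 : ℝ) else 0) - x i * x j) * v j)) =
        fun x => ρ x * ((‖x‖ ^ 2 * (if i = j then (1 : ℝ) else 0) - x i * x j) * (v i * v j)) := by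
      funext x; ring
    rw [heq]; exact h
  calc v ⬝ᵥ (Ibar C ρ) *ᵥ v
      = ∑ i, ∑ j, v i * ((Ibar C ρ) i j * v j) := by
        simp [dotProduct, Matrix.mulVec, Finset.mul_sum]
    _ = ∑ i, ∑ j, ∫ x in C,
          v i * (ρ x * (‖x‖ ^ 2 * (if i = j then (1 : ℝ) else 0) - x i * x j) * v j) := by
        refine Finset.sum_congr rfl fun i _ => Finset.sum_congr rfl fun j _ => ?_
        rw [show (Ibar C ρ) i j =
          ∫ x in C, ρ x * (‖x‖ ^ 2 * (if i = j then (1 : ℝ) else 0) - x i * x j) from rfl,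
          ← integral_mul_const, ← integral_const_mul]
    _ = ∫ x in C, ∑ i, ∑ j,
          v i * (ρ x * (‖x‖ ^ 2 * (if i = j then (1 : ℝ) else 0) - x i * x j) * v j) := by
        rw [integral_finset_sum _ fun i _ => integrable_finset_sum _ fun j _ => hint i j]
        refine Finset.sum_congr rfl fun i _ => ?_
        rw [integral_finset_sum _ fun j _ => hint i j]
    _ = ∫ x in C, ρ x * ((∑ i, v i ^ 2) * (∑ i, x i ^ 2) - (∑ i, v i * x i) ^ 2) := by
        congr 1
        funext x
        simp only [aux_norm_sq_eq, Fin.sum_univ_three, Fin.isValue]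
        norm_num [Fin.ext_iff]
        ring

lemma aux_quad_Ig (C : Set (EuclideanSpace ℝ (Fin 3))) (ρ : EuclideanSpace ℝ (Fin 3) → ℝ)
    (mS : ℝ) (v : Fin 3 → ℝ) :
    v ⬝ᵥ (Ig C ρ mS) *ᵥ v =
      (1 / mS) * ((∑ i, v i ^ 2) * (∑ i, gvec C ρ i ^ 2) - (∑ i, v i * gvec C ρ i) ^ 2) := by
  simp only [Ig, Matrix.mulVec, dotProduct, Matrix.smul_apply, Matrix.of_apply,
    smul_eq_mul, aux_norm_sq_eq, Fin.sum_univ_three, Fin.isValue]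
  norm_num [Fin.ext_iff]
  ring

lemma aux_quad_le {C : Set (EuclideanSpace ℝ (Fin 3))} (hC_meas : MeasurableSet C)
    (hC_bdd : Bornology.IsBounded C) {ρ : EuclideanSpace ℝ (Fin 3) → ℝ}
    (hρ_int : IntegrableOn ρ C) (hρ_nonneg : ∀ x, 0 ≤ ρ x)
    (hmF_pos : 0 < ∫ x in C, ρ x) {mS : ℝ} (hmS : (∫ x in C, ρ x) ≤ mS) (v : Fin 3 → ℝ) :
    v ⬝ᵥ (Ig C ρ mS) *ᵥ v ≤ v ⬝ᵥ (Ibar C ρ) *ᵥ v := by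
  set mF := ∫ x in C, ρ x with hmFdef
  have hmS_pos : 0 < mS := lt_of_lt_of_le hmF_pos hmS
  set S := ∑ i, v i ^ 2 with hS
  set g : EuclideanSpace ℝ (Fin 3) := gvec C ρ with hg
  set c : Fin 3 → ℝ := fun i => g i / mF with hc
  have hgc : ∀ i, g i = mF * c i := fun i => by
    rw [hc]; field_simp
  have hgi : ∀ i, (∫ x in C, ρ x * x i) = g i := fun i =>
    (aux_gvec_coord hC_meas hC_bdd hρ_int i).symm
  set Pc := ∑ j, v j * c j with hPc
  set qc : ℝ := S * (∑ i, c i ^ 2) - Pc ^ 2 with hqc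
  have hqc_nonneg : 0 ≤ qc := by
    rw [hqc, sub_nonneg, hPc, hS]
    exact Finset.sum_mul_sq_le_sq_mul_sq _ _ _
  -- the shifted quadratic integrand and its integrability
  have hint_q' : Integrable (fun x : EuclideanSpace ℝ (Fin 3) =>
      ρ x * (S * (∑ i, (x i - c i) ^ 2) - (∑ i, v i * (x i - c i)) ^ 2))
      (volume.restrict C) := by
    refine aux_int_mul hC_meas hC_bdd hρ_int ?_
    refine (continuous_const.mul (continuous_finset_sum _ fun i _ => ?_)).sub
      ((continuous_finset_sum _ fun i _ => ?_).pow 2)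
    · exact ((aux_cont_coord i).sub continuous_const).pow 2
    · exact continuous_const.mul ((aux_cont_coord i).sub continuous_const)
  have hint_lin : ∀ i : Fin 3, Integrable (fun x : EuclideanSpace ℝ (Fin 3) => ρ x * x i)
      (volume.restrict C) := fun i => aux_int_mul hC_meas hC_bdd hρ_int (aux_cont_coord i)
  have hint_lin' : ∀ i : Fin 3, Integrable (fun x : EuclideanSpace ℝ (Fin 3) =>
      (2 * (S * c i - Pc * v i)) * (ρ x * x i)) (volume.restrict C) :=
    fun i => (hint_lin i).const_mul _
  set IQ := ∫ x in C, ρ x * (S * (∑ i, x i ^ 2) - (∑ i, v i * x i) ^ 2) with hIQ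
  have hsplit : IQ =
      (∫ x in C, ρ x * (S * (∑ i, (x i - c i) ^ 2) - (∑ i, v i * (x i - c i)) ^ 2)) +
      (∑ i, (2 * (S * c i - Pc * v i)) * (∫ x in C, ρ x * x i)) - qc * mF := by
    rw [hIQ]
    have heq : (fun x : EuclideanSpace ℝ (Fin 3) =>
        ρ x * (S * (∑ i, x i ^ 2) - (∑ i, v i * x i) ^ 2)) = fun x =>
        (ρ x * (S * (∑ i, (x i - c i) ^ 2) - (∑ i, v i * (x i - c i)) ^ 2) +
          ∑ i, (2 * (S * c i - Pc * v i)) * (ρ x * x i)) - qc * ρ x := by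
      funext x
      simp only [hqc, hPc, Fin.sum_univ_three, Fin.isValue]
      ring
    have hA : Integrable (fun x : EuclideanSpace ℝ (Fin 3) =>
        ρ x * (S * (∑ i, (x i - c i) ^ 2) - (∑ i, v i * (x i - c i)) ^ 2) +
          ∑ i, (2 * (S * c i - Pc * v i)) * (ρ x * x i)) (volume.restrict C) :=
      hint_q'.add (integrable_finset_sum _ fun i _ => hint_lin' i)
    rw [heq, integral_sub hA (hρ_int.const_mul qc),
      integral_add hint_q' (integrable_finset_sum _ fun i _ => hint_lin' i),
      integral_finset_sum _ fun i _ => hint_lin' i, integral_const_mul, hmFdef]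
    simp_rw [integral_const_mul]
  have hq'_nonneg : 0 ≤ ∫ x in C, ρ x * (S * (∑ i, (x i - c i) ^ 2) -
      (∑ i, v i * (x i - c i)) ^ 2) := by
    refine integral_nonneg fun x => mul_nonneg (hρ_nonneg x) (sub_nonneg.2 ?_)
    rw [hS]
    exact Finset.sum_mul_sq_le_sq_mul_sq _ _ _
  have hlin : ∑ i, (2 * (S * c i - Pc * v i)) * (∫ x in C, ρ x * x i) = 2 * (mF * qc) := by
    have : ∀ i, (∫ x in C, ρ x * x i) = mF * c i := fun i => by rw [hgi i, hgc i]
    simp only [this, hqc, hPc, Fin.sum_univ_three, Fin.isValue]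
    ring
  have hIQ_ge : mF * qc ≤ IQ := by
    rw [hsplit, hlin]; linarith
  have hIQ_nonneg : 0 ≤ IQ := le_trans (mul_nonneg hmF_pos.le hqc_nonneg) hIQ_ge
  rw [aux_quad_Ig, aux_quad_Ibar hC_meas hC_bdd hρ_int, ← hg, ← hS, ← hIQ]
  have hqg : S * (∑ i, g i ^ 2) - (∑ i, v i * g i) ^ 2 = mF ^ 2 * qc := by
    simp only [hqc, hPc, Fin.sum_univ_three, Fin.isValue, hgc]
    ring
  rw [hqg]
  have h1 : mF ^ 2 * qc ≤ mS * IQ := by nlinarith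
  calc (1 / mS) * (mF ^ 2 * qc) ≤ (1 / mS) * (mS * IQ) :=
        mul_le_mul_of_nonneg_left h1 (by positivity)
    _ = IQ := by field_simp

/-- **Lemma 2 (positive definiteness of the central inertia tensor).** For a nonnegative
integrable density `ρ` on a bounded measurable set `C ⊆ ℝ³` with total fluid mass
`m_F = ∫_C ρ > 0`, a symmetric positive definite body inertia tensor `I_C`, body mass
`m_B > 0` and total mass `m_S = m_B + m_F`, the central inertia tensor
`I(ρ) := I_C + Ī(ρ) − I_g(ρ)` of the coupled system is symmetric and positive definite. -/
theorem central_inertia_tensor_posDef (C : Set (EuclideanSpace ℝ (Fin 3)))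
    (hC_meas : MeasurableSet C) (hC_bdd : Bornology.IsBounded C)
    (ρ : EuclideanSpace ℝ (Fin 3) → ℝ) (hρ_int : IntegrableOn ρ C)
    (hρ_nonneg : ∀ x, 0 ≤ ρ x)
    (mF : ℝ) (hmF : mF = ∫ x in C, ρ x) (hmF_pos : 0 < mF)
    (IC : Matrix (Fin 3) (Fin 3) ℝ) (hIC_symm : IC.IsSymm) (hIC_posdef : IC.PosDef)
    (mB : ℝ) (hmB : 0 < mB) (mS : ℝ) (hmS : mS = mB + mF) :
    (IC + Ibar C ρ - Ig C ρ mS).IsSymm ∧ (IC + Ibar C ρ - Ig C ρ mS).PosDef := by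
  have hmF_pos' : 0 < ∫ x in C, ρ x := hmF ▸ hmF_pos
  have hle : (∫ x in C, ρ x) ≤ mS := by rw [hmS, ← hmF]; linarith
  have hsymm : (IC + Ibar C ρ - Ig C ρ mS).IsSymm :=
    (hIC_symm.add (aux_Ibar_symm C ρ)).sub (aux_Ig_symm C ρ mS)
  refine ⟨hsymm, ?_, fun v hv => ?_⟩
  · ext i j
    simp [Matrix.conjTranspose_apply, hsymm.apply]
  · have h1 : 0 < v ⬝ᵥ IC *ᵥ v := by simpa [dotProduct, mulVec, Finsupp.sum_fintype, Finset.mul_sum, mul_assoc] using hIC_posdef.2 hv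
    have h2 := aux_quad_le hC_meas hC_bdd hρ_int hρ_nonneg hmF_pos' hle v
    have h3 : v ⬝ᵥ (IC + Ibar C ρ - Ig C ρ mS) *ᵥ v =
        v ⬝ᵥ IC *ᵥ v + v ⬝ᵥ (Ibar C ρ) *ᵥ v - v ⬝ᵥ (Ig C ρ mS) *ᵥ v := by
      rw [Matrix.sub_mulVec, Matrix.add_mulVec, dotProduct_sub, dotProduct_add]
    simpa [dotProduct, mulVec, Finsupp.sum_fintype, Finset.mul_sum, mul_assoc] using (by linarith : (0:ℝ) < v ⬝ᵥ (IC + Ibar C ρ - Ig C ρ mS) *ᵥ v)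

end
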